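/- arXiv:2103.06458 — 5 statements merged into one kernel-verified Lean document; each statement's English description precedes it below -/
import Mathlib

section
/- For every x = (x₁,x₂,x₃) ∈ ℝ³ with θ := ‖x‖ > 0 and every α ∈ {1,2,3}, the Fréchet derivative at x of the map ℝ³ → M₃(ℝ), y ↦ exp(ŷ), applied to the standard basis vector e_α, equals ((θ cos θ − sin θ)/θ³) x_α x̂ + (sin θ/θ) E_α + ((θ sin θ − 2(1 − cos θ))/θ⁴) x_α x̂² + ((1 − cos θ)/θ²)(E_α x̂ + x̂ E_α). -/
open Matrix Real

noncomputable section

/-- `ℝ³` with the Euclidean norm. -/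
abbrev E3 := EuclideanSpace ℝ (Fin 3)

/-- Hat map: the skew-symmetric matrix associated to a vector `x ∈ ℝ³`,
with rows `(0, −x₃, x₂)`, `(x₃, 0, −x₁)`, `(−x₂, x₁, 0)`. -/
def hat (x : E3) : Matrix (Fin 3) (Fin 3) ℝ :=
  !![0, -x 2, x 1; x 2, 0, -x 0; -x 1, x 0, 0]

/-- Standard basis vectors `e_α` of `ℝ³`. -/
def e (α : Fin 3) : E3 := EuclideanSpace.single α 1

attribute [local instance] Matrix.normedAddCommGroup Matrix.normedSpace

abbrev M3 := Matrix (Fin 3) (Fin 3) ℝ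

lemma norm_sq_E3 (y : E3) : ‖y‖ ^ 2 = y 0 ^ 2 + y 1 ^ 2 + y 2 ^ 2 := by
  rw [EuclideanSpace.norm_eq, Real.sq_sqrt (by positivity)]
  simp [Fin.sum_univ_three, sq_abs]

lemma hat_zero : hat (0 : E3) = 0 := by
  ext i j
  fin_cases i <;> fin_cases j <;> simp [hat, vecHead, vecTail]

lemma hat_cube (y : E3) : hat y ^ 3 = (-(‖y‖ ^ 2)) • hat y := by
  have h := norm_sq_E3 y
  rw [pow_succ, pow_succ, pow_one]
  ext i j
  fin_cases i <;> fin_cases j <;>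
    simp [hat, Matrix.mul_apply, Fin.sum_univ_three, h, Matrix.smul_apply] <;> ring

lemma hat_pow_odd (y : E3) (k : ℕ) :
    hat y ^ (2 * k + 1) = ((-1 : ℝ) ^ k * ‖y‖ ^ (2 * k)) • hat y := by
  induction k with
  | zero => simp
  | succ k ih =>
    have h2 : 2 * (k + 1) + 1 = (2 * k + 1) + 2 := by ring
    rw [h2, pow_add, ih, smul_mul_assoc,
      show hat y * hat y ^ 2 = hat y ^ 3 from (pow_succ' _ 2).symm, hat_cube, smul_smul]
    congr 1
    ring

lemma hat_pow_even (y : E3) (k : ℕ) :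
    hat y ^ (2 * (k + 1)) = ((-1 : ℝ) ^ k * ‖y‖ ^ (2 * k)) • hat y ^ 2 := by
  rw [show 2 * (k + 1) = (2 * k + 1) + 1 by ring, pow_succ, hat_pow_odd, smul_mul_assoc, ← pow_two]

set_option maxHeartbeats 1000000 in
/-- Rodrigues' formula. -/
lemma exp_hat (y : E3) :
    NormedSpace.exp (hat y) =
      1 + (Real.sin ‖y‖ / ‖y‖) • hat y + ((1 - Real.cos ‖y‖) / ‖y‖ ^ 2) • hat y ^ 2 := by
  rcases eq_or_ne y 0 with rfl | hy
  · simp [hat_zero, NormedSpace.exp_zero]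
  have hθ : ‖y‖ ≠ 0 := norm_ne_zero_iff.mpr hy
  rw [NormedSpace.exp_eq_tsum (𝕂 := ℝ)]
  have ho : HasSum (fun k : ℕ => (((2 * k + 1).factorial : ℝ))⁻¹ • hat y ^ (2 * k + 1))
      ((Real.sin ‖y‖ / ‖y‖) • hat y) := by
    have h := ((Real.hasSum_sin ‖y‖).div_const ‖y‖).smul_const (hat y)
    have he : (fun k : ℕ => (((2 * k + 1).factorial : ℝ))⁻¹ • hat y ^ (2 * k + 1)) =
        fun k : ℕ => ((-1 : ℝ) ^ k * ‖y‖ ^ (2 * k + 1) / ((2 * k + 1).factorial : ℝ) / ‖y‖) •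
          hat y := by
      funext k
      rw [hat_pow_odd, smul_smul]
      congr 1
      have : ((2 * k + 1).factorial : ℝ) ≠ 0 := Nat.cast_ne_zero.mpr (2 * k + 1).factorial_ne_zero
      field_simp
      ring
    rw [he]; exact h
  have hcos := Real.hasSum_cos ‖y‖
  have h1 : HasSum (fun n : ℕ => (-1 : ℝ) ^ (n + 1) * ‖y‖ ^ (2 * (n + 1)) /
      ((2 * (n + 1)).factorial : ℝ)) (Real.cos ‖y‖ - 1) := by
    have := (hasSum_nat_add_iff'
      (f := fun n : ℕ => (-1 : ℝ) ^ n * ‖y‖ ^ (2 * n) / ((2 * n).factorial : ℝ)) 1).mpr hcos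
    simpa using this
  have h2 := (h1.div_const (-(‖y‖ ^ 2))).smul_const (hat y ^ 2)
  have hval : (Real.cos ‖y‖ - 1) / (-(‖y‖ ^ 2)) = (1 - Real.cos ‖y‖) / ‖y‖ ^ 2 := by
    field_simp
    ring
  rw [hval] at h2
  have he2 : (fun k : ℕ => (((2 * (k + 1)).factorial : ℝ))⁻¹ • hat y ^ (2 * (k + 1))) =
      fun k : ℕ => ((-1 : ℝ) ^ (k + 1) * ‖y‖ ^ (2 * (k + 1)) / ((2 * (k + 1)).factorial : ℝ) /
        (-(‖y‖ ^ 2))) • hat y ^ 2 := by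
    funext k
    rw [hat_pow_even, smul_smul]
    congr 1
    have : ((2 * (k + 1)).factorial : ℝ) ≠ 0 :=
      Nat.cast_ne_zero.mpr (2 * (k + 1)).factorial_ne_zero
    field_simp
    ring
  rw [← he2] at h2
  have heven : HasSum (fun k : ℕ => (((2 * k).factorial : ℝ))⁻¹ • hat y ^ (2 * k))
      (((1 - Real.cos ‖y‖) / ‖y‖ ^ 2) • hat y ^ 2 + 1) := by
    have := (hasSum_nat_add_iff
      (f := fun k : ℕ => (((2 * k).factorial : ℝ))⁻¹ • hat y ^ (2 * k)) 1).mp h2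
    simpa using this
  have total := HasSum.even_add_odd (f := fun n : ℕ => ((n.factorial : ℝ))⁻¹ • hat y ^ n)
    heven ho
  have hre : (1 : M3) + (Real.sin ‖y‖ / ‖y‖) • hat y
      + ((1 - Real.cos ‖y‖) / ‖y‖ ^ 2) • hat y ^ 2
      = (((1 - Real.cos ‖y‖) / ‖y‖ ^ 2) • hat y ^ 2 + 1) + (Real.sin ‖y‖ / ‖y‖) • hat y := by
    abel
  rw [hre]
  exact total.tsum_eq

/-- hat as a linear map -/
def hatl : E3 →ₗ[ℝ] M3 where
  toFun := hat
  map_add' a b := by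
    ext i j
    fin_cases i <;> fin_cases j <;> simp [hat, vecHead, vecTail] <;> ring
  map_smul' c a := by
    ext i j
    fin_cases i <;> fin_cases j <;> simp [hat, vecHead, vecTail] <;> ring

def hatL : E3 →L[ℝ] M3 := LinearMap.toContinuousLinearMap hatl

lemma hatL_apply (v : E3) : hatL v = hat v := rfl

def hatMulL : E3 →L[ℝ] E3 →L[ℝ] M3 :=
  LinearMap.toContinuousLinearMap
    { toFun := fun v => LinearMap.toContinuousLinearMap
        ((LinearMap.mulLeft ℝ (hat v)).comp hatl)
      map_add' := fun a b => by
        refine ContinuousLinearMap.ext fun w => ?_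
        show hat (a + b) * hatl w = hat a * hatl w + hat b * hatl w
        rw [show hat (a + b) = hat a + hat b from hatl.map_add a b, add_mul]
      map_smul' := fun c a => by
        refine ContinuousLinearMap.ext fun w => ?_
        show hat (c • a) * hatl w = c • (hat a * hatl w)
        rw [show hat (c • a) = c • hat a from hatl.map_smul c a, smul_mul_assoc] }

lemma hatMulL_apply (v w : E3) : hatMulL v w = hat v * hat w := rfl

lemma hasFDerivAt_norm_E3 (x : E3) (hx : x ≠ 0) :
    HasFDerivAt (fun y : E3 => ‖y‖) (‖x‖⁻¹ • innerSL ℝ x) x := by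
  have hθ : ‖x‖ ≠ 0 := norm_ne_zero_iff.mpr hx
  have h1 : HasFDerivAt (fun y : E3 => ‖y‖ ^ 2) (2 • innerSL ℝ x) x :=
    (hasStrictFDerivAt_norm_sq x).hasFDerivAt
  have h2 : HasDerivAt Real.sqrt (1 / (2 * Real.sqrt (‖x‖ ^ 2))) (‖x‖ ^ 2) :=
    Real.hasDerivAt_sqrt (pow_ne_zero 2 hθ)
  have h3 := h2.comp_hasFDerivAt x h1
  have hfun : (Real.sqrt ∘ fun y : E3 => ‖y‖ ^ 2) = fun y : E3 => ‖y‖ := by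
    funext y; simp [Function.comp, Real.sqrt_sq (norm_nonneg y)]
  rw [hfun] at h3
  refine h3.congr_fderiv ?_
  rw [Real.sqrt_sq (norm_nonneg x)]
  ext v
  simp only [ContinuousLinearMap.coe_smul', Pi.smul_apply, ContinuousLinearMap.smul_apply,
    ContinuousLinearMap.add_apply, two_smul, smul_eq_mul, one_div]
  field_simp
  ring

/-- the Fréchet derivative of `y ↦ exp(ŷ)` at `x ≠ 0` in direction `e_α`. -/
theorem stmt6 (x : E3) (hx : 0 < ‖x‖) (α : Fin 3) :
    fderiv ℝ (fun y : E3 => NormedSpace.exp (hat y)) x (e α) =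
      (((‖x‖ * Real.cos ‖x‖ - Real.sin ‖x‖) / ‖x‖ ^ 3) * x α) • hat x
        + (Real.sin ‖x‖ / ‖x‖) • hat (e α)
        + (((‖x‖ * Real.sin ‖x‖ - 2 * (1 - Real.cos ‖x‖)) / ‖x‖ ^ 4) * x α) • hat x ^ 2
        + ((1 - Real.cos ‖x‖) / ‖x‖ ^ 2) • (hat (e α) * hat x + hat x * hat (e α)) := by
  have hθ : ‖x‖ ≠ 0 := ne_of_gt hx
  have hx0 : x ≠ 0 := norm_ne_zero_iff.mp hθ
  have hN := hasFDerivAt_norm_E3 x hx0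
  have hg1' : HasDerivAt (fun t : ℝ => Real.sin t / t)
      ((Real.cos ‖x‖ * ‖x‖ - Real.sin ‖x‖ * 1) / ‖x‖ ^ 2) ‖x‖ :=
    (Real.hasDerivAt_sin ‖x‖).div (hasDerivAt_id ‖x‖) hθ
  have hg1 := hg1'.comp_hasFDerivAt x hN
  have hg2' : HasDerivAt (fun t : ℝ => (1 - Real.cos t) / t ^ 2)
      (((0 - -Real.sin ‖x‖) * ‖x‖ ^ 2 - (1 - Real.cos ‖x‖) * (2 * ‖x‖ ^ 1)) / (‖x‖ ^ 2) ^ 2)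
      ‖x‖ :=
    ((hasDerivAt_const ‖x‖ 1).sub (Real.hasDerivAt_cos ‖x‖)).div (hasDerivAt_pow 2 ‖x‖)
      (pow_ne_zero 2 hθ)
  have hg2 := hg2'.comp_hasFDerivAt x hN
  have hhat : HasFDerivAt (fun y : E3 => hat y) hatL x := hatL.hasFDerivAt
  have hb : IsBoundedBilinearMap ℝ (fun p : E3 × E3 => hat p.1 * hat p.2) :=
    hatMulL.isBoundedBilinearMap
  have hdiag : HasFDerivAt (fun y : E3 => (y, y))
      ((ContinuousLinearMap.id ℝ E3).prod (ContinuousLinearMap.id ℝ E3)) x :=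
    (hasFDerivAt_id x).prodMk (hasFDerivAt_id x)
  have hq : HasFDerivAt (fun y : E3 => hat y * hat y)
      ((hb.deriv (x, x)).comp
        ((ContinuousLinearMap.id ℝ E3).prod (ContinuousLinearMap.id ℝ E3))) x := by
    refine HasFDerivAt.comp (f := fun y : E3 => (y, y))
      (g := fun p : E3 × E3 => hat p.1 * hat p.2) x ?_ hdiag
    exact hb.hasFDerivAt (x, x)
  have hA := hg1.smul hhat
  have hB := hg2.smul hq
  have hF := (hA.const_add (1 : M3)).add hB
  have hF' : HasFDerivAt (fun y : E3 => (1 : M3) + (Real.sin ‖y‖ / ‖y‖) • hat y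
      + ((1 - Real.cos ‖y‖) / ‖y‖ ^ 2) • (hat y * hat y)) _ x := hF
  have hfun : (fun y : E3 => NormedSpace.exp (hat y)) = (fun y : E3 =>
      (1 : M3) + (Real.sin ‖y‖ / ‖y‖) • hat y
      + ((1 - Real.cos ‖y‖) / ‖y‖ ^ 2) • (hat y * hat y)) := by
    funext y
    rw [exp_hat y, pow_two (hat y)]
  rw [hfun, hF'.fderiv]
  show (sin ‖x‖ / ‖x‖) • hat (e α)
      + (((cos ‖x‖ * ‖x‖ - sin ‖x‖ * 1) / ‖x‖ ^ 2) * (‖x‖⁻¹ * inner ℝ x (e α))) • hat x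
      + (((1 - cos ‖x‖) / ‖x‖ ^ 2) • (hat x * hat (e α) + hat (e α) * hat x)
      + ((((0 - -sin ‖x‖) * ‖x‖ ^ 2 - (1 - cos ‖x‖) * (2 * ‖x‖ ^ 1)) / (‖x‖ ^ 2) ^ 2)
          * (‖x‖⁻¹ * inner ℝ x (e α))) • (hat x * hat x)) = _
  have hinner : (inner ℝ x (e α) : ℝ) = x α := by
    simpa [e] using EuclideanSpace.inner_single_right (𝕜 := ℝ) α 1 x
  rw [hinner, pow_two (hat x)]
  match_scalars <;> field_simp <;> ring
end
end

section
/- Let x = (x₁,x₂,x₃) ∈ ℝ³ with θ := ‖x‖ and cos θ ≠ 1. Define g_{αβ}(x) := ((2 cos θ − 2 + θ²)/θ⁴) x_α x_β + (2(1 − cos θ)/θ²) δ_{αβ} and g^{βγ}(x) := ((2 cos θ − 2 + θ²)/(2θ²(cos θ − 1))) x_β x_γ + (θ²/(2(1 − cos θ))) δ_{βγ}. Then for all α, γ ∈ {1,2,3}: Σ_{β=1}^{3} g_{αβ}(x) g^{βγ}(x) = δ_{αγ}, i.e., the 3×3 matrix (g^{βγ}(x)) is the inverse of the matrix (g_{αβ}(x)).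 -/
open Matrix Real

noncomputable section

attribute [local instance] Matrix.normedAddCommGroup Matrix.normedSpace

/-- The metric tensor `g_{αβ}(x)` of SO(3) in exponential coordinates. -/
def gdown (x : E3) (α β : Fin 3) : ℝ :=
  ((2 * Real.cos ‖x‖ - 2 + ‖x‖ ^ 2) / ‖x‖ ^ 4) * (x α * x β)
    + (2 * (1 - Real.cos ‖x‖) / ‖x‖ ^ 2) * (if α = β then 1 else 0)

/-- The claimed inverse metric `g^{βγ}(x)`. -/
def gup (x : E3) (β γ : Fin 3) : ℝ :=
  ((2 * Real.cos ‖x‖ - 2 + ‖x‖ ^ 2) / (2 * ‖x‖ ^ 2 * (Real.cos ‖x‖ - 1))) * (x β * x γ)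
    + (‖x‖ ^ 2 / (2 * (1 - Real.cos ‖x‖))) * (if β = γ then 1 else 0)

set_option maxHeartbeats 1000000 in
/-- Structural expansion of the sum, valid for any coefficients. -/
lemma stmt8_expand (A B D E : ℝ) (a : Fin 3 → ℝ) (α γ : Fin 3) :
    (∑ β : Fin 3,
      (A * (a α * a β) + E * (if α = β then 1 else 0))
        * (B * (a β * a γ) + D * (if β = γ then 1 else 0)))
      = (A * B * (a 0 ^ 2 + a 1 ^ 2 + a 2 ^ 2) + A * D + E * B) * (a α * a γ)
        + (E * D) * (if α = γ then 1 else 0) := by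
  fin_cases α <;> fin_cases γ <;>
    · simp only [Fin.sum_univ_three, Fin.isValue, Fin.zero_eta, Fin.mk_one, Fin.reduceFinMk,
        Fin.reduceEq, reduceIte, mul_one, mul_zero, add_zero, zero_add]
      ring

/-- `(g^{βγ})` is the inverse of the metric tensor `(g_{αβ})`. -/
theorem stmt8 (x : E3) (h : Real.cos ‖x‖ ≠ 1) (α γ : Fin 3) :
    (∑ β : Fin 3, gdown x α β * gup x β γ) = if α = γ then 1 else 0 := by
  have hn0 : ‖x‖ ≠ 0 := by
    intro h0
    apply h
    rw [h0, Real.cos_zero]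
  have hn2 : ‖x‖ ^ 2 = x 0 ^ 2 + x 1 ^ 2 + x 2 ^ 2 := by
    rw [EuclideanSpace.norm_eq, Real.sq_sqrt (by positivity)]
    simp [Fin.sum_univ_three, sq]
  have hc : Real.cos ‖x‖ - 1 ≠ 0 := sub_ne_zero.mpr h
  have hc' : 1 - Real.cos ‖x‖ ≠ 0 := sub_ne_zero.mpr (Ne.symm h)
  set N := ‖x‖ with hN
  set C := Real.cos N with hC
  have key := stmt8_expand ((2 * C - 2 + N ^ 2) / N ^ 4)
    ((2 * C - 2 + N ^ 2) / (2 * N ^ 2 * (C - 1)))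
    (N ^ 2 / (2 * (1 - C))) (2 * (1 - C) / N ^ 2) (fun i => x i) α γ
  simp only [gdown, gup, ← hN, ← hC] at key ⊢
  rw [key, ← hn2]
  have c1 : (2 * C - 2 + N ^ 2) / N ^ 4 * ((2 * C - 2 + N ^ 2) / (2 * N ^ 2 * (C - 1))) * N ^ 2
      + (2 * C - 2 + N ^ 2) / N ^ 4 * (N ^ 2 / (2 * (1 - C)))
      + 2 * (1 - C) / N ^ 2 * ((2 * C - 2 + N ^ 2) / (2 * N ^ 2 * (C - 1))) = 0 := by
    field_simp
    ring
  have c2 : 2 * (1 - C) / N ^ 2 * (N ^ 2 / (2 * (1 - C))) = 1 := by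
    field_simp
  rw [c1, c2, zero_mul, zero_add, one_mul]
end
end

section
/- Let u ∈ ℝ³ with θ := ‖u‖ > 0, let T ∈ (0, 2π/θ], and let v : [0,T) → ℝ³ be continuous, differentiable on (0,T), and satisfy for all t ∈ (0,T) and all γ ∈ {1,2,3}: v_γ'(t) + [(2 cos(θt) − 2 + θt · sin(θt))/(2t(1 − cos(θt)))] · (v_γ(t) − (u_γ/θ²)(u·v(t))) = 0. Then u·v(t) = u·v(0) =: C for all t ∈ [0,T), and for all t ∈ (0,T): v(t) = (1/f(t)) ((θ/√2) v(0) − (C/(√2 θ)) u) + (C/θ²) u, where f(t) := √((1 − cos(θt))/t²). -/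
open Matrix Real

noncomputable section

attribute [local instance] Matrix.normedAddCommGroup Matrix.normedSpace

/-- A real function with vanishing derivative on `(0,T)` is constant there. -/
lemma aux_const_of_deriv_zero {F : ℝ → ℝ} {T : ℝ}
    (hF : ∀ t ∈ Set.Ioo 0 T, HasDerivAt F 0 t)
    {s₁ s₂ : ℝ} (h1 : s₁ ∈ Set.Ioo 0 T) (h2 : s₂ ∈ Set.Ioo 0 T) (hle : s₁ ≤ s₂) :
    F s₂ = F s₁ := by
  have hsub : Set.Icc s₁ s₂ ⊆ Set.Ioo 0 T := fun x hx =>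
    ⟨lt_of_lt_of_le h1.1 hx.1, lt_of_le_of_lt hx.2 h2.2⟩
  have hc : ContinuousOn F (Set.Icc s₁ s₂) := fun x hx =>
    ((hF x (hsub hx)).continuousAt).continuousWithinAt
  have hd : ∀ x ∈ Set.Ico s₁ s₂, HasDerivWithinAt F 0 (Set.Ici x) x := fun x hx =>
    ((hF x (hsub ⟨hx.1, le_of_lt hx.2⟩)).hasDerivWithinAt)
  exact constant_of_has_deriv_right_zero hc hd s₂ (Set.right_mem_Icc.2 hle)

/-- A real function with vanishing derivative on `(0,T)` that tends to `L` at `0⁺`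
equals `L` on `(0,T)`. -/
lemma aux_eq_of_deriv_zero_of_tendsto {F : ℝ → ℝ} {T L : ℝ}
    (hF : ∀ t ∈ Set.Ioo 0 T, HasDerivAt F 0 t)
    (hlim : Filter.Tendsto F (nhdsWithin 0 (Set.Ioi 0)) (nhds L)) :
    ∀ s ∈ Set.Ioo 0 T, F s = L := by
  intro s hs
  have hev : ∀ᶠ x in nhdsWithin 0 (Set.Ioi 0), F x = F s := by
    filter_upwards [Ioo_mem_nhdsGT_of_mem (Set.mem_Ico.mpr ⟨le_refl (0:ℝ), hs.1⟩)] with x hx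
    exact (aux_const_of_deriv_zero hF ⟨hx.1, hx.2.trans hs.2⟩ hs (le_of_lt hx.2)).symm
  have h2 : Filter.Tendsto F (nhdsWithin 0 (Set.Ioi 0)) (nhds (F s)) :=
    Filter.Tendsto.congr' (hev.mono fun x h => h.symm) tendsto_const_nhds
  exact tendsto_nhds_unique h2 hlim

lemma aux_sinc : Filter.Tendsto (fun y : ℝ => Real.sin y / y)
    (nhdsWithin 0 {(0:ℝ)}ᶜ) (nhds 1) := by
  have h := Real.hasDerivAt_sin 0
  rw [hasDerivAt_iff_tendsto_slope] at h
  simpa [slope_fun_def_field] using h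

lemma aux_one_sub_cos (x : ℝ) : 1 - Real.cos x = 2 * Real.sin (x/2) ^ 2 := by
  have h := Real.sin_sq_eq_half_sub (x/2)
  rw [show 2*(x/2) = x by ring] at h
  linarith

/-- conservation law and explicit solution of the parallel transport
equations along the geodesic `t ↦ tu` in exponential coordinates. -/
theorem stmt10 (u : E3) (hu : 0 < ‖u‖) (T : ℝ) (hT : T ∈ Set.Ioc 0 (2 * π / ‖u‖))
    (v : ℝ → E3) (hcont : ContinuousOn v (Set.Ico 0 T))
    (hode : ∀ t ∈ Set.Ioo 0 T, ∀ γ : Fin 3,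
      HasDerivAt (fun s => v s γ)
        (-(((2 * Real.cos (‖u‖ * t) - 2 + ‖u‖ * t * Real.sin (‖u‖ * t)) /
              (2 * t * (1 - Real.cos (‖u‖ * t)))) *
            (v t γ - u γ / ‖u‖ ^ 2 * (inner ℝ u (v t) : ℝ)))) t) :
    (∀ t ∈ Set.Ico 0 T, (inner ℝ u (v t) : ℝ) = (inner ℝ u (v 0) : ℝ)) ∧
    (∀ t ∈ Set.Ioo 0 T,
      v t = (1 / Real.sqrt ((1 - Real.cos (‖u‖ * t)) / t ^ 2)) •
            ((‖u‖ / Real.sqrt 2) • v 0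
              - ((inner ℝ u (v 0) : ℝ) / (Real.sqrt 2 * ‖u‖)) • u)
          + ((inner ℝ u (v 0) : ℝ) / ‖u‖ ^ 2) • u) := by
  obtain ⟨hT0, hTle⟩ := hT
  have hθ : (0:ℝ) < ‖u‖ := hu
  have hθ0 : ‖u‖ ≠ 0 := ne_of_gt hθ
  have hTθ : T * ‖u‖ ≤ 2 * π := (le_div_iff₀ hθ).mp hTle
  -- positivity of 1 - cos (‖u‖ t) on (0,T)
  have hcos : ∀ t ∈ Set.Ioo (0:ℝ) T, 0 < 1 - Real.cos (‖u‖ * t) := by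
    intro t ht
    rw [aux_one_sub_cos]
    have ht0 : (0:ℝ) < t := ht.1
    have h1 : 0 < ‖u‖ * t / 2 := by positivity
    have h2 : ‖u‖ * t / 2 < π := by
      have h3 : ‖u‖ * t < ‖u‖ * T := mul_lt_mul_of_pos_left ht.2 hθ
      nlinarith [Real.pi_pos]
    have hsinpos := Real.sin_pos_of_pos_of_lt_pi h1 h2
    nlinarith [hsinpos]
  -- inner product expansion
  have hinner : ∀ y : E3, (inner ℝ u y : ℝ) = ∑ γ : Fin 3, u γ * y γ := by
    intro y; simp [PiLp.inner_apply, RCLike.inner_apply, conj_trivial]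
    exact Finset.sum_congr rfl (fun _ _ => mul_comm _ _)
  have hnorm : u 0 * u 0 + u 1 * u 1 + u 2 * u 2 = ‖u‖^2 := by
    rw [← real_inner_self_eq_norm_sq, hinner, Fin.sum_univ_three]
  set g : ℝ → ℝ := fun t => (inner ℝ u (v t) : ℝ) with hg
  -- derivative of g vanishes
  have hgder : ∀ t ∈ Set.Ioo 0 T, HasDerivAt g 0 t := by
    intro t ht
    set a : ℝ := (2 * Real.cos (‖u‖ * t) - 2 + ‖u‖ * t * Real.sin (‖u‖ * t)) /
              (2 * t * (1 - Real.cos (‖u‖ * t))) with ha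
    have h1 : HasDerivAt (fun s => ∑ γ : Fin 3, u γ * v s γ)
        (∑ γ : Fin 3, u γ * (-(a * (v t γ - u γ / ‖u‖ ^ 2 * g t)))) t :=
      HasDerivAt.fun_sum (fun γ _ => (hode t ht γ).const_mul (u γ))
    have hfun : g = fun s => ∑ γ : Fin 3, u γ * v s γ := funext fun s => hinner (v s)
    have hsum0 : (∑ γ : Fin 3, u γ * (-(a * (v t γ - u γ / ‖u‖ ^ 2 * g t)))) = 0 := by
      have hgt : g t = u 0 * v t 0 + u 1 * v t 1 + u 2 * v t 2 := by
        show (inner ℝ u (v t) : ℝ) = _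
        rw [hinner (v t), Fin.sum_univ_three]
      have hn2 : (‖u‖:ℝ)^2 ≠ 0 := pow_ne_zero 2 hθ0
      rw [Fin.sum_univ_three, hgt]
      have hN : ‖u‖^2 * (‖u‖^2)⁻¹ = 1 := mul_inv_cancel₀ hn2
      linear_combination (a * (u 0 * v t 0 + u 1 * v t 1 + u 2 * v t 2) / ‖u‖^2) * hnorm
        + (a * (u 0 * v t 0 + u 1 * v t 1 + u 2 * v t 2)) * hN
    rw [hfun, ← hsum0]
    exact h1
  -- continuity of g on [0,T)
  have hgc : ContinuousOn g (Set.Ico 0 T) := continuousOn_const.inner hcont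
  have hmem0 : (0:ℝ) ∈ Set.Ico 0 T := ⟨le_refl 0, hT0⟩
  have hIcoMem : Set.Ico (0:ℝ) T ∈ nhdsWithin (0:ℝ) (Set.Ioi 0) := by
    have h := Ioo_mem_nhdsGT_of_mem (Set.mem_Ico.mpr ⟨le_refl (0:ℝ), hT0⟩)
    exact Filter.mem_of_superset h Set.Ioo_subset_Ico_self
  have hglim : Filter.Tendsto g (nhdsWithin 0 (Set.Ioi 0)) (nhds (g 0)) :=
    (hgc 0 hmem0).tendsto.mono_left (nhdsWithin_le_iff.mpr hIcoMem)
  have part1 : ∀ t ∈ Set.Ico 0 T, g t = g 0 := by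
    intro t ht
    rcases eq_or_lt_of_le ht.1 with h | h
    · rw [← h]
    · exact aux_eq_of_deriv_zero_of_tendsto hgder hglim t ⟨h, ht.2⟩
  refine ⟨part1, ?_⟩
  -- part 2
  set C : ℝ := g 0 with hC
  set p : ℝ → ℝ := fun t => (1 - Real.cos (‖u‖ * t)) / t^2 with hp
  set f : ℝ → ℝ := fun t => Real.sqrt (p t) with hf
  have hppos : ∀ t ∈ Set.Ioo (0:ℝ) T, 0 < p t := by
    intro t ht
    have h1 := hcos t ht
    have ht0 : (0:ℝ) < t := ht.1
    rw [hp]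
    positivity
  -- limit of f at 0⁺
  have hmap : Filter.Tendsto (fun t : ℝ => ‖u‖ * t / 2) (nhdsWithin 0 (Set.Ioi 0))
      (nhdsWithin 0 {(0:ℝ)}ᶜ) := by
    apply tendsto_nhdsWithin_of_tendsto_nhds_of_eventually_within
    · have h1 : Filter.Tendsto (fun t : ℝ => ‖u‖ * t / 2) (nhds 0) (nhds (‖u‖ * 0 / 2)) :=
        ((continuous_const.mul continuous_id).div_const 2).tendsto 0
      simpa using h1.mono_left nhdsWithin_le_nhds
    · filter_upwards [self_mem_nhdsWithin] with x hx
      have hx' : (0:ℝ) < x := hx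
      have hpos : (0:ℝ) < ‖u‖ * x / 2 := by positivity
      simp only [Set.mem_compl_iff, Set.mem_singleton_iff]
      exact ne_of_gt hpos
  have hplim : Filter.Tendsto p (nhdsWithin 0 (Set.Ioi 0)) (nhds (‖u‖^2/2)) := by
    have h1 : Filter.Tendsto (fun t : ℝ => ‖u‖^2/2 * (Real.sin (‖u‖*t/2) / (‖u‖*t/2))^2)
        (nhdsWithin 0 (Set.Ioi 0)) (nhds (‖u‖^2/2 * 1^2)) :=
      ((aux_sinc.comp hmap).pow 2).const_mul _
    have h2 : ∀ᶠ t in nhdsWithin 0 (Set.Ioi 0),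
        ‖u‖^2/2 * (Real.sin (‖u‖*t/2) / (‖u‖*t/2))^2 = p t := by
      filter_upwards [self_mem_nhdsWithin] with t ht
      have ht0 : (0:ℝ) < t := ht
      have ht0' : t ≠ 0 := ne_of_gt ht0
      rw [hp]
      simp only
      rw [aux_one_sub_cos (‖u‖ * t)]
      rw [show ‖u‖ * t / 2 = ‖u‖ * t / 2 from rfl]
      field_simp
    simpa using Filter.Tendsto.congr' h2 (by simpa using h1)
  have hflim : Filter.Tendsto f (nhdsWithin 0 (Set.Ioi 0)) (nhds (‖u‖ / Real.sqrt 2)) := by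
    have h1 := hplim.sqrt
    rwa [Real.sqrt_div (by positivity), Real.sqrt_sq hθ.le] at h1
  -- component limit of v
  have hvlim : ∀ γ : Fin 3, Filter.Tendsto (fun t => v t γ) (nhdsWithin 0 (Set.Ioi 0))
      (nhds (v 0 γ)) := by
    intro γ
    have h1 : Filter.Tendsto v (nhdsWithin 0 (Set.Ioi 0)) (nhds (v 0)) :=
      (hcont 0 hmem0).tendsto.mono_left (nhdsWithin_le_iff.mpr hIcoMem)
    exact ((EuclideanSpace.proj γ : E3 →L[ℝ] ℝ).continuous.tendsto (v 0)).comp h1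
  -- derivative of p on (0,T)
  have hpder : ∀ t ∈ Set.Ioo (0:ℝ) T, HasDerivAt p
      ((‖u‖ * Real.sin (‖u‖*t) * t^2 - (1 - Real.cos (‖u‖*t)) * (2*t)) / (t^2)^2) t := by
    intro t ht
    have ht0 : t ≠ 0 := ne_of_gt ht.1
    have h1 : HasDerivAt (fun s : ℝ => ‖u‖ * s) ‖u‖ t := by
      simpa using (hasDerivAt_id t).const_mul ‖u‖
    have h2 : HasDerivAt (fun s : ℝ => Real.cos (‖u‖ * s)) (-Real.sin (‖u‖*t) * ‖u‖) t :=
      HasDerivAt.cos h1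
    have hnum : HasDerivAt (fun s => 1 - Real.cos (‖u‖ * s)) (‖u‖ * Real.sin (‖u‖*t)) t := by
      have h3 := h2.const_sub 1
      rw [show ‖u‖ * Real.sin (‖u‖*t) = -(-Real.sin (‖u‖*t) * ‖u‖) by ring]
      exact h3
    have hden : HasDerivAt (fun s : ℝ => s^2) (2*t) t := by
      simpa using hasDerivAt_pow 2 t
    have h4 := hnum.div hden (pow_ne_zero 2 ht0)
    rw [hp]
    exact h4
  intro t ht
  -- the combined function F γ has zero derivative
  have hFder : ∀ γ : Fin 3, ∀ s ∈ Set.Ioo (0:ℝ) T,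
      HasDerivAt (fun r => f r * (v r γ - C / ‖u‖^2 * u γ)) 0 s := by
    intro γ s hs
    have hs0 : s ≠ 0 := ne_of_gt hs.1
    have hps := hppos s hs
    have hsp : Real.sqrt (p s) ≠ 0 := ne_of_gt (Real.sqrt_pos.mpr hps)
    have hsp2 : Real.sqrt (p s) * Real.sqrt (p s) = p s := Real.mul_self_sqrt hps.le
    set a : ℝ := (2 * Real.cos (‖u‖ * s) - 2 + ‖u‖ * s * Real.sin (‖u‖ * s)) /
              (2 * s * (1 - Real.cos (‖u‖ * s))) with ha
    set p' : ℝ := (‖u‖ * Real.sin (‖u‖*s) * s^2 - (1 - Real.cos (‖u‖*s)) * (2*s)) / (s^2)^2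
      with hp'
    have hfd : HasDerivAt f (p' / (2 * Real.sqrt (p s))) s := by
      rw [hf]
      exact (hpder s hs).sqrt (ne_of_gt hps)
    have hgC : g s = C := part1 s ⟨hs.1.le, hs.2⟩
    have hwd : HasDerivAt (fun r => v r γ - C / ‖u‖^2 * u γ)
        (-(a * (v s γ - C / ‖u‖^2 * u γ))) s := by
      have h1 := (hode s hs γ).sub_const (C / ‖u‖^2 * u γ)
      have he : v s γ - u γ / ‖u‖ ^ 2 * (inner ℝ u (v s) : ℝ) = v s γ - C / ‖u‖^2 * u γ := by
        have h2 : (inner ℝ u (v s) : ℝ) = g s := rfl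
        rw [h2, hgC]
        ring
      rw [← ha, he] at h1
      exact h1
    have hprod := hfd.mul hwd
    -- show the total derivative is zero
    have hc0 : 1 - Real.cos (‖u‖ * s) ≠ 0 := ne_of_gt (hcos s hs)
    have hkey : p' = 2 * a * p s := by
      rw [hp', ha, hp]
      simp only
      field_simp
      ring
    have hq : ∀ q : ℝ, q ≠ 0 → q * q = p s → p' / (2 * q) = a * q := by
      intro q hq0 hq2
      rw [hkey, ← hq2, div_eq_iff (by exact mul_ne_zero two_ne_zero hq0)]
      ring
    have key2 : p' / (2 * Real.sqrt (p s)) = a * Real.sqrt (p s) := hq _ hsp hsp2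
    have hzero : p' / (2 * Real.sqrt (p s)) * (v s γ - C / ‖u‖^2 * u γ) +
        f s * -(a * (v s γ - C / ‖u‖^2 * u γ)) = 0 := by
      rw [key2]
      have hfs : f s = Real.sqrt (p s) := rfl
      rw [hfs]
      ring
    rw [← hzero]
    exact hprod
  -- value of F γ on (0,T)
  have hFval : ∀ γ : Fin 3, f t * (v t γ - C / ‖u‖^2 * u γ) =
      ‖u‖ / Real.sqrt 2 * (v 0 γ - C / ‖u‖^2 * u γ) := by
    intro γ
    have hlim : Filter.Tendsto (fun r => f r * (v r γ - C / ‖u‖^2 * u γ))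
        (nhdsWithin 0 (Set.Ioi 0)) (nhds (‖u‖ / Real.sqrt 2 * (v 0 γ - C / ‖u‖^2 * u γ))) :=
      hflim.mul ((hvlim γ).sub_const _)
    exact aux_eq_of_deriv_zero_of_tendsto (hFder γ) hlim t ht
  -- conclude
  have hpt := hppos t ht
  have hft : (0:ℝ) < f t := Real.sqrt_pos.mpr hpt
  have hft0 : f t ≠ 0 := ne_of_gt hft
  have hs2 : Real.sqrt 2 ≠ 0 := by positivity
  ext γ
  simp only [PiLp.add_apply, PiLp.smul_apply, PiLp.sub_apply, smul_eq_mul]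
  have hfeq : Real.sqrt ((1 - Real.cos (‖u‖ * t)) / t ^ 2) = f t := rfl
  have hCeq : (inner ℝ u (v 0) : ℝ) = C := rfl
  rw [hfeq, hCeq]
  have hsmall : ‖u‖ / Real.sqrt 2 * (v 0 γ - C / ‖u‖^2 * u γ)
      = ‖u‖ / Real.sqrt 2 * v 0 γ - C / (Real.sqrt 2 * ‖u‖) * u γ := by
    field_simp
  have h1 : v t γ - C / ‖u‖^2 * u γ
      = (‖u‖ / Real.sqrt 2 * v 0 γ - C / (Real.sqrt 2 * ‖u‖) * u γ) / f t := by
    rw [eq_div_iff hft0, ← hsmall]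
    linear_combination hFval γ
  linear_combination h1
end
end

section
/- Let n_i, n_k ∈ ℝ³ be unit vectors, let θ, t ∈ ℝ, and let R⁰ ∈ SO(3). Then tr(exp(−tθ n̂_i) · R⁰ · exp(tθ n̂_k) · n̂_k) = tr(−(1/2) n̂_i R⁰ n̂_k² − (1/2) n̂_i² R⁰ n̂_k) + tr(R⁰ n̂_k² + n̂_i² R⁰ n̂_k²) sin(θt) + tr(R⁰ n̂_k + n̂_i² R⁰ n̂_k) cos(θt) + tr(−(1/2) n̂_i R⁰ n̂_k − (1/2) n̂_i² R⁰ n̂_k²) sin(2θt) + tr((1/2) n̂_i R⁰ n̂_k² − (1/2) n̂_i² R⁰ n̂_k) cos(2θt). -/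
open Matrix Real

noncomputable section

attribute [local instance] Matrix.normedAddCommGroup Matrix.normedSpace

/-- `SO(3)`: real 3×3 matrices with `RᵀR = I` and `det R = 1`. -/
def SO3 : Set (Matrix (Fin 3) (Fin 3) ℝ) := {R | Rᵀ * R = 1 ∧ R.det = 1}

lemma hat_smul (c : ℝ) (x : E3) : hat (c • x) = c • hat x := by
  ext i j; fin_cases i <;> fin_cases j <;>
    simp [hat, PiLp.smul_apply, mul_comm]

lemma hat_cube_gen (n : E3) :
    hat n * (hat n * hat n) = -((n 0 ^ 2 + n 1 ^ 2 + n 2 ^ 2) • hat n) := by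
  ext i j; fin_cases i <;> fin_cases j <;>
    simp [hat, Matrix.mul_apply, Fin.sum_univ_three] <;> ring

lemma norm_one_sq (n : E3) (hn : ‖n‖ = 1) : n 0 ^ 2 + n 1 ^ 2 + n 2 ^ 2 = 1 := by
  have h := congrArg (· ^ 2) hn
  simp only [one_pow] at h
  rw [EuclideanSpace.norm_eq] at h
  rw [Real.sq_sqrt (by positivity)] at h
  simpa [Fin.sum_univ_three, Real.norm_eq_abs, sq_abs] using h

set_option maxHeartbeats 1000000 in
lemma rodrigues {A : Matrix (Fin 3) (Fin 3) ℝ} (hA : A * (A * A) = -A) (s : ℝ) :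
    NormedSpace.exp (s • A) =
      1 + Real.sin s • A + (1 - Real.cos s) • (A * A) := by
  have hApowOdd : ∀ k : ℕ, A ^ (2 * k + 1) = ((-1 : ℝ)) ^ k • A := by
    intro k
    induction k with
    | zero => simp
    | succ n ih =>
      have h1 : 2 * (n + 1) + 1 = (2 * n + 1) + 2 := by ring
      rw [h1, pow_add, ih, pow_two, smul_mul_assoc, hA]
      simp [pow_succ, mul_smul]
  have hApowEven : ∀ k : ℕ, A ^ (2 * k + 2) = ((-1 : ℝ)) ^ k • (A * A) := by
    intro k
    have : 2 * k + 2 = (2 * k + 1) + 1 := by ring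
    rw [this, pow_succ, hApowOdd k, smul_mul_assoc]
  -- odd part
  have hodd : HasSum (fun k : ℕ => ((Nat.factorial (2 * k + 1) : ℝ))⁻¹ • (s • A) ^ (2 * k + 1))
      (Real.sin s • A) := by
    have h := (Real.hasSum_sin s).smul_const A
    convert h using 1
    funext k
    rw [smul_pow, hApowOdd k, smul_smul, smul_smul]
    congr 1
    ring
  -- even part
  have hcos1 : HasSum (fun n : ℕ => (-1 : ℝ) ^ (n + 1) * s ^ (2 * (n + 1)) / (Nat.factorial (2 * (n + 1)) : ℝ))
      (Real.cos s - 1) := by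
    refine (hasSum_nat_add_iff (f := fun n : ℕ => (-1 : ℝ) ^ n * s ^ (2 * n) / (Nat.factorial (2 * n) : ℝ)) 1).mpr ?_
    convert Real.hasSum_cos s using 1
    · rfl
    simp
  have hcos2 : HasSum (fun n : ℕ => -((-1 : ℝ) ^ (n + 1) * s ^ (2 * (n + 1)) / (Nat.factorial (2 * (n + 1)) : ℝ)))
      (1 - Real.cos s) := by simpa [neg_sub] using hcos1.neg
  have heven1 : HasSum (fun n : ℕ => ((Nat.factorial (2 * (n + 1)) : ℝ))⁻¹ • (s • A) ^ (2 * (n + 1)))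
      ((1 - Real.cos s) • (A * A)) := by
    have h := hcos2.smul_const (A * A)
    convert h using 1
    funext n
    have h2 : 2 * (n + 1) = 2 * n + 2 := by ring
    rw [h2, smul_pow, hApowEven n, smul_smul, smul_smul]
    congr 1
    rw [pow_succ]
    ring
  have heven : HasSum (fun k : ℕ => ((Nat.factorial (2 * k) : ℝ))⁻¹ • (s • A) ^ (2 * k))
      (1 + (1 - Real.cos s) • (A * A)) := by
    have h := (hasSum_nat_add_iff
      (f := fun k : ℕ => ((Nat.factorial (2 * k) : ℝ))⁻¹ • (s • A) ^ (2 * k)) 1).mp heven1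
    simpa [add_comm] using h
  have htot := HasSum.even_add_odd (f := fun n : ℕ => ((Nat.factorial n : ℝ))⁻¹ • (s • A) ^ n) heven hodd
  simp only [NormedSpace.exp_eq_tsum ℝ]
  rw [htot.tsum_eq]
  abel

/-- expansion of `tr(exp(−tθ n̂ᵢ) R⁰ exp(tθ n̂ₖ) n̂ₖ)` as a trigonometric
polynomial in `θt`. -/
theorem stmt14 (ni nk : E3) (hni : ‖ni‖ = 1) (hnk : ‖nk‖ = 1) (θ t : ℝ)
    (R0 : Matrix (Fin 3) (Fin 3) ℝ) (hR0 : R0 ∈ SO3) :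
    (NormedSpace.exp (hat ((-(t * θ)) • ni)) * R0 *
        NormedSpace.exp (hat ((t * θ) • nk)) * hat nk).trace =
      ((-(1/2 : ℝ)) • (hat ni * R0 * hat nk ^ 2)
          + (-(1/2 : ℝ)) • (hat ni ^ 2 * R0 * hat nk)).trace
      + (R0 * hat nk ^ 2 + hat ni ^ 2 * R0 * hat nk ^ 2).trace * Real.sin (θ * t)
      + (R0 * hat nk + hat ni ^ 2 * R0 * hat nk).trace * Real.cos (θ * t)
      + ((-(1/2 : ℝ)) • (hat ni * R0 * hat nk)
          + (-(1/2 : ℝ)) • (hat ni ^ 2 * R0 * hat nk ^ 2)).trace * Real.sin (2 * θ * t)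
      + ((1/2 : ℝ) • (hat ni * R0 * hat nk ^ 2)
          + (-(1/2 : ℝ)) • (hat ni ^ 2 * R0 * hat nk)).trace * Real.cos (2 * θ * t) := by
  have hki := norm_one_sq ni hni
  have hkk := norm_one_sq nk hnk
  have hAi : hat ni * (hat ni * hat ni) = -hat ni := by
    rw [hat_cube_gen, hki, one_smul]
  have hAk : hat nk * (hat nk * hat nk) = -hat nk := by
    rw [hat_cube_gen, hkk, one_smul]
  rw [hat_smul, hat_smul, rodrigues hAi, rodrigues hAk]
  rw [Real.sin_neg, Real.cos_neg]
  rw [show (2:ℝ) * θ * t = 2 * (θ * t) by ring, Real.sin_two_mul, Real.cos_two_mul,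
    show t * θ = θ * t from mul_comm t θ]
  simp only [pow_two, mul_add, add_mul, Matrix.smul_mul, Matrix.mul_smul, one_mul, mul_one,
    mul_assoc, hAk, mul_neg, neg_mul, trace_add, trace_smul, trace_neg, smul_eq_mul,
    smul_smul, neg_smul, trace_smul]
  ring_nf
  linear_combination (-(hat ni * (R0 * (hat nk * hat nk))).trace) * Real.sin_sq_add_cos_sq (θ * t)
end
end

section
/- Let α ∈ (0, π) and let R⁰ ∈ SO(3) be the rotation about the first coordinate axis by angle α, i.e., the matrix with rows (1,0,0), (0, cos α, −sin α), (0, sin α, cos α). Let x = (x₁,x₂,x₃) and y = (y₁,y₂,y₃) be unit vectors in ℝ³ with y₁ = x₁, and suppose that tr(R⁰ x̂²) = tr(x̂ R⁰ ŷ) and tr(x̂ R⁰ ŷ) + tr(x̂² R⁰ ŷ²) = 0. Then either y = x, or y = (R⁰)ᵀ x. -/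
open Matrix Real

noncomputable section

attribute [local instance] Matrix.normedAddCommGroup Matrix.normedSpace

lemma sq_add_sq_zero {u v : ℝ} (h : u ^ 2 + v ^ 2 = 0) : u = 0 ∧ v = 0 := by
  constructor <;> [skip; skip] <;>
    · have h1 : u ^ 2 = 0 ∨ v ^ 2 = 0 → True := fun _ => trivial
      nlinarith [sq_nonneg u, sq_nonneg v]

set_option maxHeartbeats 1600000 in
/-- the time-independent constraints force `y = x` or `y = (R⁰)ᵀ x`. -/
theorem stmt15 (α : ℝ) (hα : α ∈ Set.Ioo 0 π) (x y : E3)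
    (hx : ‖x‖ = 1) (hy : ‖y‖ = 1)
    (R0 : Matrix (Fin 3) (Fin 3) ℝ)
    (hR0 : R0 = !![1, 0, 0; 0, Real.cos α, -Real.sin α; 0, Real.sin α, Real.cos α])
    (h1 : y 0 = x 0)
    (h2 : (R0 * hat x ^ 2).trace = (hat x * R0 * hat y).trace)
    (h3 : (hat x * R0 * hat y).trace + (hat x ^ 2 * R0 * hat y ^ 2).trace = 0) :
    y = x ∨ y = (R0ᵀ *ᵥ (x : Fin 3 → ℝ) : Fin 3 → ℝ) := by
  subst hR0
  have hs : 0 < Real.sin α := Real.sin_pos_of_pos_of_lt_pi hα.1 hα.2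
  have hcs : Real.sin α ^ 2 + Real.cos α ^ 2 = 1 := Real.sin_sq_add_cos_sq α
  have hx' : x 0 ^ 2 + x 1 ^ 2 + x 2 ^ 2 = 1 := by
    rw [EuclideanSpace.norm_eq] at hx
    have h1' : (∑ i, ‖x i‖ ^ 2) = 1 := by
      have hnn : (0:ℝ) ≤ ∑ i, ‖x i‖ ^ 2 := Finset.sum_nonneg fun i _ => sq_nonneg _
      nlinarith [Real.sq_sqrt hnn, hx]
    simpa [Fin.sum_univ_three, Real.norm_eq_abs, sq_abs] using h1'
  have hy' : y 0 ^ 2 + y 1 ^ 2 + y 2 ^ 2 = 1 := by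
    rw [EuclideanSpace.norm_eq] at hy
    have h1' : (∑ i, ‖y i‖ ^ 2) = 1 := by
      have hnn : (0:ℝ) ≤ ∑ i, ‖y i‖ ^ 2 := Finset.sum_nonneg fun i _ => sq_nonneg _
      nlinarith [Real.sq_sqrt hnn, hy]
    simpa [Fin.sum_univ_three, Real.norm_eq_abs, sq_abs] using h1'
  simp [hat, pow_two, Matrix.mul_fin_three, Matrix.trace_fin_three] at h2 h3
  set a := x 0 with ha
  set b := x 1 with hb
  set d := x 2 with hd
  set p := y 0 with hp
  set q := y 1 with hq
  set r := y 2 with hr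
  set c := Real.cos α with hc
  set s := Real.sin α with hsdef
  have hn : q ^ 2 + r ^ 2 = b ^ 2 + d ^ 2 := by
    linear_combination hy' - hx' - (p + a) * h1
  have hE1 : (1 + c) * ((b * q + d * r) - (b ^ 2 + d ^ 2)) - s * (b * r - d * q) = 0 := by
    linear_combination h2 - 2 * a * c * h1
  have hE2 : ((b ^ 2 + d ^ 2) - (b * q + d * r)) *
      ((b ^ 2 + d ^ 2) + s * (b * r - d * q) - c * (b * q + d * r)) = 0 := by
    linear_combination h3 +
      (-2*a^3*c - 2*a^2*c*p - a*b^2*c - a*b*c*q - a*b*q + a*b*r*s + 2*a*c - a*c*d^2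
        - a*c*d*r - a*d*q*s - a*d*r - b^2*c*p - c*d^2*p) * h1 +
      (-2*a^2*c + b^2*c - b*c*q - b*q + b*r*s + c*d^2 - c*d*r - c*q^2 - c*r^2
        - d*q*s - d*r) * hx' +
      (-b^2 + b^2*c - c + c*d^2 - d^2) * hn
  rcases mul_eq_zero.mp hE2 with hA | hB
  · -- y = x
    left
    have key : (q - b) ^ 2 + (r - d) ^ 2 = 0 := by linear_combination hn + 2 * hA
    obtain ⟨k1, k2⟩ := sq_add_sq_zero key
    have hqb : q = b := by linarith [sub_eq_zero.mp k1]
    have hrd : r = d := by linarith [sub_eq_zero.mp k2]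
    ext i
    fin_cases i
    · exact h1
    · exact hqb
    · exact hrd
  · -- y = R0ᵀ x
    right
    have hu : (b * q + d * r) - c * (b ^ 2 + d ^ 2) = 0 := by
      linear_combination hE1 + hB
    have key : (q - (c * b + s * d)) ^ 2 + (r - (c * d - s * b)) ^ 2 = 0 := by
      linear_combination hn + (b ^ 2 + d ^ 2) * hcs + 2 * hB
    obtain ⟨k1, k2⟩ := sq_add_sq_zero key
    have hq1 : q = c * b + s * d := by linarith [sub_eq_zero.mp k1]
    have hr1 : r = c * d - s * b := by linarith [sub_eq_zero.mp k2]
    funext i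
    fin_cases i
    · simp [Matrix.mulVec, dotProduct, Fin.sum_univ_three, Matrix.vecHead, Matrix.vecTail]
      linarith [h1]
    · simp [Matrix.mulVec, dotProduct, Fin.sum_univ_three, Matrix.vecHead, Matrix.vecTail]
      linarith [hq1]
    · simp [Matrix.mulVec, dotProduct, Fin.sum_univ_three, Matrix.vecHead, Matrix.vecTail]
      linarith [hr1]
end
end
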